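/- arXiv:2512.19303 — 2 statements merged into one kernel-verified Lean document; each statement's English description precedes it below -/
import Mathlib

section
/- (Proposition 5.1, part 2.) Let n ≥ 1. Define the following subsets of GL(n+1, ℝ), with elements written in block form [[A, b], [cᵀ, d]]: G₀ = { [[A, b], [0, d]] invertible : d > 0 }; H₊ = { [[Iₙ, 0], [cᵀ, 1]] : c ∈ ℝⁿ, c ≠ 0 }; H₋ = { [[Iₙ, 0], [cᵀ, −1]] : c ∈ ℝⁿ, c ≠ 0 }; H₀ = { [[Iₙ + bcᵀ, b], [cᵀ, 1]] : b, c ∈ ℝⁿ with cᵀb + 1 = 0 }; and G̃ = { [[A, b], [cᵀ, d]] ∈ GL(n+1, ℝ) : c ≠ 0 or d > 0 }. Then G̃ = G₀ ∪ (H₊·G₀) ∪ (H₀·G₀) ∪ (H₋·G₀), where X·G₀ denotes the set of products x·g₀ with x ∈ X and g₀ ∈ G₀. -/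
open Matrix Pointwise

/-- The block matrix `[[A, b], [cᵀ, d]]` of size `(n+1) × (n+1)`. -/
def blockMat {n : ℕ} (A : Matrix (Fin n) (Fin n) ℝ) (b c : Fin n → ℝ) (d : ℝ) :
    Matrix (Fin n ⊕ Unit) (Fin n ⊕ Unit) ℝ :=
  Matrix.fromBlocks A (fun i _ => b i) (fun _ j => c j) (fun _ _ => d)

/-- The subgroup `G₀` of invertible matrices `[[A, b], [0, d]]` with `d > 0`. -/
def Gzero (n : ℕ) : Set (Matrix (Fin n ⊕ Unit) (Fin n ⊕ Unit) ℝ) :=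
  {g | ∃ (A : Matrix (Fin n) (Fin n) ℝ) (b : Fin n → ℝ) (d : ℝ),
    0 < d ∧ g = blockMat A b 0 d ∧ g.det ≠ 0}

/-- The set `H₊` of matrices `[[Iₙ, 0], [cᵀ, 1]]` with `c ≠ 0`. -/
def Hplus (n : ℕ) : Set (Matrix (Fin n ⊕ Unit) (Fin n ⊕ Unit) ℝ) :=
  {g | ∃ c : Fin n → ℝ, c ≠ 0 ∧ g = blockMat 1 0 c 1}

/-- The set `H₋` of matrices `[[Iₙ, 0], [cᵀ, −1]]` with `c ≠ 0`. -/
def Hminus (n : ℕ) : Set (Matrix (Fin n ⊕ Unit) (Fin n ⊕ Unit) ℝ) :=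
  {g | ∃ c : Fin n → ℝ, c ≠ 0 ∧ g = blockMat 1 0 c (-1)}

/-- The set `H₀` of matrices `[[Iₙ + bcᵀ, b], [cᵀ, 1]]` with `cᵀb + 1 = 0`. -/
def Hnought (n : ℕ) : Set (Matrix (Fin n ⊕ Unit) (Fin n ⊕ Unit) ℝ) :=
  {g | ∃ b c : Fin n → ℝ, c ⬝ᵥ b + 1 = 0 ∧ g = blockMat (1 + vecMulVec b c) b c 1}

/-- The set `G̃` of invertible matrices `[[A, b], [cᵀ, d]]` with `c ≠ 0` or `d > 0`. -/
def Gtilde (n : ℕ) : Set (Matrix (Fin n ⊕ Unit) (Fin n ⊕ Unit) ℝ) :=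
  {g | g.det ≠ 0 ∧
    ((fun j => g (Sum.inr ()) (Sum.inl j)) ≠ 0 ∨ 0 < g (Sum.inr ()) (Sum.inr ()))}

lemma blockMat_congr {n : ℕ} {A A' : Matrix (Fin n) (Fin n) ℝ} {b b' c c' : Fin n → ℝ}
    {d d' : ℝ} (hA : A = A') (hb : b = b') (hc : c = c') (hd : d = d') :
    blockMat A b c d = blockMat A' b' c' d' := by
  subst hA; subst hb; subst hc; subst hd; rfl

lemma blockMat_mul {n : ℕ} (A₁ A₂ : Matrix (Fin n) (Fin n) ℝ) (b₁ c₁ b₂ c₂ : Fin n → ℝ)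
    (d₁ d₂ : ℝ) :
    blockMat A₁ b₁ c₁ d₁ * blockMat A₂ b₂ c₂ d₂ =
      blockMat (A₁ * A₂ + vecMulVec b₁ c₂) (A₁ *ᵥ b₂ + d₂ • b₁) (c₁ ᵥ* A₂ + d₁ • c₂)
        (c₁ ⬝ᵥ b₂ + d₁ * d₂) := by
  ext i j
  rcases i with i | ⟨⟩ <;> rcases j with j | ⟨⟩ <;>
    simp [blockMat, mul_apply, fromBlocks, Fintype.sum_sum_type, vecMulVec_apply, mulVec,
      vecMul, dotProduct, Finset.sum_add_distrib, mul_comm]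

lemma blockMat_det_lowtri {n : ℕ} (A : Matrix (Fin n) (Fin n) ℝ) (b : Fin n → ℝ) (d : ℝ) :
    (blockMat A b 0 d).det = A.det * d := by
  unfold blockMat
  have : (fun (_ : Unit) (j : Fin n) => (0 : Fin n → ℝ) j) = (0 : Matrix Unit (Fin n) ℝ) := by
    ext i j; simp
  rw [this]
  refine (det_fromBlocks_zero₂₁ _ _ _).trans ?_
  simp [det_unique]
  exact Or.inl (det_unique _)

lemma blockMat_det_uptri {n : ℕ} (A : Matrix (Fin n) (Fin n) ℝ) (c : Fin n → ℝ) (d : ℝ) :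
    (blockMat A 0 c d).det = A.det * d := by
  unfold blockMat
  have : (fun (i : Fin n) (_ : Unit) => (0 : Fin n → ℝ) i) = (0 : Matrix (Fin n) Unit ℝ) := by
    ext i j; simp
  rw [this]
  refine (det_fromBlocks_zero₁₂ _ _ _).trans ?_
  simp [det_unique]
  exact Or.inl (det_unique _)

lemma blockMat_one {n : ℕ} : blockMat (1 : Matrix (Fin n) (Fin n) ℝ) 0 0 1 = 1 := by
  ext i j
  rcases i with i | ⟨⟩ <;> rcases j with j | ⟨⟩ <;>
    simp [blockMat, fromBlocks, one_apply, Sum.inl.injEq]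

lemma eq_blockMat {n : ℕ} (g : Matrix (Fin n ⊕ Unit) (Fin n ⊕ Unit) ℝ) :
    g = blockMat (fun i j => g (Sum.inl i) (Sum.inl j)) (fun i => g (Sum.inl i) (Sum.inr ()))
      (fun j => g (Sum.inr ()) (Sum.inl j)) (g (Sum.inr ()) (Sum.inr ())) := by
  ext i j
  rcases i with i | ⟨⟩ <;> rcases j with j | ⟨⟩ <;> rfl

lemma vecMulVec_mul {n : ℕ} (b c : Fin n → ℝ) (A : Matrix (Fin n) (Fin n) ℝ) :
    vecMulVec b c * A = vecMulVec b (c ᵥ* A) := by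
  ext i j
  simp [mul_apply, vecMulVec_apply, vecMul, dotProduct, Finset.mul_sum, mul_assoc]

lemma vecMulVec_mulVec' {n : ℕ} (b c x : Fin n → ℝ) :
    vecMulVec b c *ᵥ x = (c ⬝ᵥ x) • b := by
  ext i
  simp only [mulVec, vecMulVec_apply, dotProduct, Pi.smul_apply, smul_eq_mul, Finset.sum_mul]
  exact Finset.sum_congr rfl fun k _ => by ring

lemma vecMul_vecMulVec' {n : ℕ} (x b c : Fin n → ℝ) :
    x ᵥ* vecMulVec b c = (x ⬝ᵥ b) • c := by
  ext j
  simp [vecMul, vecMulVec_apply, dotProduct, Finset.sum_mul, mul_assoc]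

lemma vecMulVec_zero' {n : ℕ} (b : Fin n → ℝ) : vecMulVec b (0 : Fin n → ℝ) = 0 := by
  ext i j; simp [vecMulVec_apply]

lemma blockMat_row {n : ℕ} (A : Matrix (Fin n) (Fin n) ℝ) (b c : Fin n → ℝ) (d : ℝ) :
    (fun j => blockMat A b c d (Sum.inr ()) (Sum.inl j)) = c := rfl

lemma blockMat_corner {n : ℕ} (A : Matrix (Fin n) (Fin n) ℝ) (b c : Fin n → ℝ) (d : ℝ) :
    blockMat A b c d (Sum.inr ()) (Sum.inr ()) = d := rfl

lemma vecMul_ne_zero' {n : ℕ} {c : Fin n → ℝ} {A : Matrix (Fin n) (Fin n) ℝ}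
    (hc : c ≠ 0) (hA : A.det ≠ 0) : c ᵥ* A ≠ 0 := by
  intro h
  apply hc
  have := congrArg (· ᵥ* A⁻¹) h
  simpa [vecMul_vecMul, Matrix.mul_nonsing_inv A (isUnit_iff_ne_zero.mpr hA)] using this

/-- The inverse of an H₀ element. -/
lemma Hnought_mul_inv {n : ℕ} (b' c' : Fin n → ℝ) (h1 : c' ⬝ᵥ b' = -1) :
    blockMat (1 + vecMulVec b' c') b' c' 1 * blockMat 1 (-b') (-c') 0 = 1 := by
  rw [blockMat_mul, ← blockMat_one]
  refine blockMat_congr ?_ ?_ ?_ ?_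
  · rw [Matrix.mul_one]
    have : vecMulVec b' (-c') = -vecMulVec b' c' := by ext i j; simp [vecMulVec_apply]
    rw [this]; abel
  · rw [add_mulVec, one_mulVec, vecMulVec_mulVec', dotProduct_neg, h1]
    ext i; simp
  · rw [vecMul_one]
    ext j; simp
  · rw [dotProduct_neg, h1]; ring

/-- H₀ elements have nonzero determinant. -/
lemma Hnought_det_ne_zero {n : ℕ} (b' c' : Fin n → ℝ) (h1 : c' ⬝ᵥ b' = -1) :
    (blockMat (1 + vecMulVec b' c') b' c' 1).det ≠ 0 := by
  have hmi := Hnought_mul_inv b' c' h1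
  have hd : (blockMat (1 + vecMulVec b' c') b' c' 1).det
      * (blockMat 1 (-b') (-c') 0).det = 1 := by
    rw [← det_mul, hmi, det_one]
  exact left_ne_zero_of_mul_eq_one hd

/-- **Proposition 5.1, part 2.** `G̃ = G₀ ∪ H₊G₀ ∪ H₀G₀ ∪ H₋G₀`. -/
theorem Gtilde_decomposition {n : ℕ} (hn : 1 ≤ n) :
    Gtilde n =
      Gzero n ∪ (Hplus n * Gzero n) ∪ (Hnought n * Gzero n) ∪ (Hminus n * Gzero n) := by
  ext g
  constructor
  · rintro ⟨hdet, hcd⟩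
    set A : Matrix (Fin n) (Fin n) ℝ := fun i j => g (Sum.inl i) (Sum.inl j) with hA_def
    set b : Fin n → ℝ := fun i => g (Sum.inl i) (Sum.inr ()) with hb_def
    set c : Fin n → ℝ := fun j => g (Sum.inr ()) (Sum.inl j) with hc_def
    set d : ℝ := g (Sum.inr ()) (Sum.inr ()) with hd_def
    have hg : g = blockMat A b c d := eq_blockMat g
    by_cases hc : c = 0
    · -- g ∈ G₀
      have hd : 0 < d := by
        rcases hcd with h | h
        · exact absurd hc h
        · exact h
      exact Or.inl (Or.inl (Or.inl ⟨A, b, d, hd, by rw [hg, hc], hdet⟩))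
    · by_cases hA : A.det = 0
      · -- H₀ case
        obtain ⟨c₀, hc₀0, hc₀A⟩ := Matrix.exists_vecMul_eq_zero_iff.mpr hA
        have ht : c₀ ⬝ᵥ b ≠ 0 := by
          intro h0
          apply hdet
          apply Matrix.exists_vecMul_eq_zero_iff.mp
          refine ⟨Sum.elim c₀ 0, ?_, ?_⟩
          · intro hw
            apply hc₀0
            ext i
            exact congrFun hw (Sum.inl i)
          · ext j
            rcases j with j | ⟨⟩
            · have h1 := congrFun hc₀A j
              simp only [vecMul, dotProduct, Pi.zero_apply] at h1 ⊢
              simpa [Fintype.sum_sum_type] using h1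
            · simp only [vecMul, dotProduct, Pi.zero_apply] at h0 ⊢
              simpa [Fintype.sum_sum_type] using h0
        obtain ⟨c₂, hc₂0, hc₂A, hc₂b⟩ :
            ∃ c₂ : Fin n → ℝ, c₂ ≠ 0 ∧ c₂ ᵥ* A = 0 ∧ c₂ ⬝ᵥ b < 0 := by
          rcases lt_or_gt_of_ne ht with h | h
          · exact ⟨c₀, hc₀0, hc₀A, h⟩
          · refine ⟨-c₀, neg_ne_zero.mpr hc₀0, by rw [neg_vecMul, hc₀A, neg_zero], ?_⟩
            rw [neg_dotProduct]; linarith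
        set b' : Fin n → ℝ := (-(c₂ ⬝ᵥ c₂)⁻¹) • c₂ with hb'_def
        have hcc : c₂ ⬝ᵥ c₂ ≠ 0 := fun h => hc₂0 (dotProduct_self_eq_zero.mp h)
        have hcb' : c₂ ⬝ᵥ b' = -1 := by
          rw [hb'_def, dotProduct_smul, smul_eq_mul, neg_mul, inv_mul_cancel₀ hcc]
        have hfact : g = blockMat (1 + vecMulVec b' c₂) b' c₂ 1
            * blockMat (A - vecMulVec b' c) (b - d • b') 0 (-(c₂ ⬝ᵥ b)) := by
          rw [blockMat_mul, hg]
          refine blockMat_congr ?_ ?_ ?_ ?_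
          · symm
            rw [vecMulVec_zero', add_zero, add_mul, one_mul, vecMulVec_mul, vecMul_sub,
              hc₂A, vecMul_vecMulVec', hcb']
            have h2 : (0 : Fin n → ℝ) - (-1 : ℝ) • c = c := by ext j; simp
            rw [h2, sub_add_cancel]
          · symm
            rw [add_mulVec, one_mulVec, vecMulVec_mulVec', dotProduct_sub, dotProduct_smul,
              hcb']
            ext i; simp; ring
          · symm
            rw [vecMul_sub, hc₂A, vecMul_vecMulVec', hcb']
            ext j; simp
          · symm
            rw [dotProduct_sub, dotProduct_smul, hcb']
            simp
        have hdet0 : (blockMat (A - vecMulVec b' c) (b - d • b') 0 (-(c₂ ⬝ᵥ b))).det ≠ 0 := by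
          intro h0
          apply hdet
          rw [hfact, det_mul, h0, mul_zero]
        refine Or.inl (Or.inr ?_)
        rw [hfact]
        exact Set.mul_mem_mul ⟨b', c₂, by rw [hcb']; ring, rfl⟩
          ⟨A - vecMulVec b' c, b - d • b', -(c₂ ⬝ᵥ b), by linarith, rfl, hdet0⟩
      · -- A invertible: H₊ or H₋
        have hIA : IsUnit A.det := isUnit_iff_ne_zero.mpr hA
        set c' : Fin n → ℝ := c ᵥ* A⁻¹ with hc'_def
        have hc'A : c' ᵥ* A = c := by
          rw [hc'_def, vecMul_vecMul, Matrix.nonsing_inv_mul A hIA, vecMul_one]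
        have hc'0 : c' ≠ 0 := by
          intro h
          apply hc
          rw [← hc'A, h, zero_vecMul]
        set e : ℝ := d - c' ⬝ᵥ b with he_def
        have hdetg : g.det = A.det * e := by
          haveI := A.invertibleOfIsUnitDet hIA
          rw [hg]
          unfold blockMat
          refine (det_fromBlocks₁₁ _ _ _ _).trans ?_
          congr 1
          rw [det_unique]
          simp only [Matrix.sub_apply, invOf_eq_nonsing_inv, mul_apply, he_def, hc'_def, vecMul,
            dotProduct, Fintype.sum_unique, Finset.sum_mul]
          show (d - ∑ x, (∑ i, c i * A⁻¹ i x) * b x) = _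
          simp only [Finset.sum_mul]
        have he0 : e ≠ 0 := by
          intro h
          apply hdet
          rw [hdetg, h, mul_zero]
        rcases lt_or_gt_of_ne he0 with he | he
        · -- e < 0 : H₋
          have hfact : g = blockMat 1 0 c' (-1) * blockMat A b 0 (-e) := by
            rw [blockMat_mul, hg]
            refine blockMat_congr ?_ ?_ ?_ ?_
            · symm; rw [Matrix.one_mul, vecMulVec_zero', add_zero]
            · symm; rw [one_mulVec]; ext i; simp
            · symm; rw [hc'A]; ext j; simp
            · rw [he_def]; ring
          refine Or.inr ?_
          rw [hfact]
          refine Set.mul_mem_mul ⟨c', hc'0, rfl⟩ ⟨A, b, -e, by linarith, rfl, ?_⟩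
          rw [blockMat_det_lowtri]
          exact mul_ne_zero hA (by linarith)
        · -- e > 0 : H₊
          have hfact : g = blockMat 1 0 c' 1 * blockMat A b 0 e := by
            rw [blockMat_mul, hg]
            refine blockMat_congr ?_ ?_ ?_ ?_
            · symm; rw [Matrix.one_mul, vecMulVec_zero', add_zero]
            · symm; rw [one_mulVec]; ext i; simp
            · symm; rw [hc'A]; ext j; simp
            · rw [he_def]; ring
          refine Or.inl (Or.inl (Or.inr ?_))
          rw [hfact]
          refine Set.mul_mem_mul ⟨c', hc'0, rfl⟩ ⟨A, b, e, he, rfl, ?_⟩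
          rw [blockMat_det_lowtri]
          exact mul_ne_zero hA (by linarith)
  · rintro (((hG | hG) | hG) | hG)
    · obtain ⟨A, b, d, hd, hgeq, hdet⟩ := hG
      exact ⟨hdet, Or.inr (by rw [hgeq, blockMat_corner]; exact hd)⟩
    · -- H₊ G₀
      rw [Set.mem_mul] at hG
      obtain ⟨x, ⟨c', hc'0, hxeq⟩, y, ⟨A, b, d, hd, hyeq, hydet⟩, hxy⟩ := hG
      have hAdet : A.det ≠ 0 := by
        rw [hyeq, blockMat_det_lowtri] at hydet
        exact left_ne_zero_of_mul hydet
      have hxdet : x.det ≠ 0 := by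
        rw [hxeq, blockMat_det_uptri, det_one, one_mul]
        exact one_ne_zero
      refine ⟨?_, Or.inl ?_⟩
      · rw [← hxy, det_mul]
        exact mul_ne_zero hxdet (hyeq ▸ hydet)
      · rw [← hxy, hxeq, hyeq, blockMat_mul, blockMat_row]
        have : c' ᵥ* A + (1 : ℝ) • (0 : Fin n → ℝ) = c' ᵥ* A := by ext j; simp
        rw [this]
        exact vecMul_ne_zero' hc'0 hAdet
    · -- H₀ G₀
      rw [Set.mem_mul] at hG
      obtain ⟨x, ⟨b', c', hcb', hxeq⟩, y, ⟨A, b, d, hd, hyeq, hydet⟩, hxy⟩ := hG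
      have hcb'' : c' ⬝ᵥ b' = -1 := by linarith
      have hAdet : A.det ≠ 0 := by
        rw [hyeq, blockMat_det_lowtri] at hydet
        exact left_ne_zero_of_mul hydet
      have hc'0 : c' ≠ 0 := by
        intro h
        rw [h, zero_dotProduct] at hcb''
        norm_num at hcb''
      have hxdet : x.det ≠ 0 := by
        rw [hxeq]
        exact Hnought_det_ne_zero b' c' hcb''
      refine ⟨?_, Or.inl ?_⟩
      · rw [← hxy, det_mul]
        exact mul_ne_zero hxdet (hyeq ▸ hydet)
      · rw [← hxy, hxeq, hyeq, blockMat_mul, blockMat_row]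
        have : c' ᵥ* A + (1 : ℝ) • (0 : Fin n → ℝ) = c' ᵥ* A := by ext j; simp
        rw [this]
        exact vecMul_ne_zero' hc'0 hAdet
    · -- H₋ G₀
      rw [Set.mem_mul] at hG
      obtain ⟨x, ⟨c', hc'0, hxeq⟩, y, ⟨A, b, d, hd, hyeq, hydet⟩, hxy⟩ := hG
      have hAdet : A.det ≠ 0 := by
        rw [hyeq, blockMat_det_lowtri] at hydet
        exact left_ne_zero_of_mul hydet
      have hxdet : x.det ≠ 0 := by
        rw [hxeq, blockMat_det_uptri, det_one, one_mul]
        norm_num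
      refine ⟨?_, Or.inl ?_⟩
      · rw [← hxy, det_mul]
        exact mul_ne_zero hxdet (hyeq ▸ hydet)
      · rw [← hxy, hxeq, hyeq, blockMat_mul, blockMat_row]
        have : c' ᵥ* A + (-1 : ℝ) • (0 : Fin n → ℝ) = c' ᵥ* A := by ext j; simp
        rw [this]
        exact vecMul_ne_zero' hc'0 hAdet
end

section
/- (Part of Theorem 5.4: the Poisson–Gaussian and negative-multinomial–gamma classes are in the same G-orbit.) Let n ≥ 1 and 1 ≤ k ≤ n. Define V_{I,k}(m) = diag(m₁, …, m_k, 1, …, 1) on the open set M = (0,∞)^k × ℝ^{n−k}, and V_{IV,k}(m) = mmᵀ + diag(0, m₂, …, m_k, m₁, …, m₁), whose last n−k diagonal correction entries all equal m₁. Then there exist an invertible real (n+1)×(n+1) matrix g = [[A, b], [cᵀ, d]] and a nonempty open set U ⊆ { m ∈ ℝⁿ : cᵀm + d > 0 } with h_g(U) ⊆ M such that T_g(V_{I,k})(m) = V_{IV,k}(m) for all m ∈ U. -/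
open Matrix

/-- The homography `h_g(x) = (Ax + b)/(cᵀx + d)` associated to the block matrix
`g = [[A, b], [cᵀ, d]]`. -/
noncomputable def homog {n : ℕ} (A : Matrix (Fin n) (Fin n) ℝ) (b c : Fin n → ℝ) (d : ℝ)
    (x : Fin n → ℝ) : Fin n → ℝ :=
  (c ⬝ᵥ x + d)⁻¹ • (A.mulVec x + b)

/-- The Jacobian matrix `h'_g(x) = (cᵀx + d)⁻² ((cᵀx + d)A − (Ax + b)cᵀ)`. -/
noncomputable def homogJac {n : ℕ} (A : Matrix (Fin n) (Fin n) ℝ) (b c : Fin n → ℝ) (d : ℝ)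
    (x : Fin n → ℝ) : Matrix (Fin n) (Fin n) ℝ :=
  ((c ⬝ᵥ x + d) ^ 2)⁻¹ • ((c ⬝ᵥ x + d) • A - vecMulVec (A.mulVec x + b) c)

/-- The transformation `T_g(V)(m) = (cᵀm + d)⁻¹ (h'_g(m))⁻¹ V(h_g(m)) ((h'_g(m))ᵀ)⁻¹`. -/
noncomputable def Tg {n : ℕ} (A : Matrix (Fin n) (Fin n) ℝ) (b c : Fin n → ℝ) (d : ℝ)
    (V : (Fin n → ℝ) → Matrix (Fin n) (Fin n) ℝ) (m : Fin n → ℝ) :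
    Matrix (Fin n) (Fin n) ℝ :=
  (c ⬝ᵥ m + d)⁻¹ •
    ((homogJac A b c d m)⁻¹ * V (homog A b c d m) * ((homogJac A b c d m)ᵀ)⁻¹)

/-- The Poisson–Gaussian variance function `V_{I,k}(m) = diag(m₁, …, m_k, 1, …, 1)` (with `Fin n`
indexed from `0`: entries of index `< k` are `m i`, the others are `1`). -/
noncomputable def VIk {n : ℕ} (k : ℕ) (m : Fin n → ℝ) : Matrix (Fin n) (Fin n) ℝ :=
  Matrix.diagonal fun i : Fin n => if (i : ℕ) < k then m i else 1

/-- The negative-multinomial–gamma variance function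
`V_{IV,k}(m) = mmᵀ + diag(0, m₂, …, m_k, m₁, …, m₁)`. -/
noncomputable def VIVk {n : ℕ} (hn : 1 ≤ n) (k : ℕ) (m : Fin n → ℝ) :
    Matrix (Fin n) (Fin n) ℝ :=
  vecMulVec m m +
    Matrix.diagonal fun i : Fin n =>
      if (i : ℕ) = 0 then 0 else if (i : ℕ) < k then m i else m ⟨0, hn⟩

private lemma vmv_mul_vmv {n : ℕ} (a s u t : Fin n → ℝ) :
    vecMulVec a s * vecMulVec u t = (s ⬝ᵥ u) • vecMulVec a t := by
  ext i j
  simp only [Matrix.mul_apply, vecMulVec_apply, Matrix.smul_apply, smul_eq_mul, dotProduct,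
    Finset.sum_mul]
  rw [Finset.sum_congr rfl (fun x _ => by ring : ∀ x ∈ Finset.univ,
    a i * s x * (u x * t j) = s x * u x * (a i * t j))]

private lemma vmv_mul_diag {n : ℕ} (a s w : Fin n → ℝ) :
    vecMulVec a s * Matrix.diagonal w = vecMulVec a (fun j => s j * w j) := by
  ext i j
  simp [Matrix.mul_diagonal, vecMulVec_apply, mul_assoc]

private lemma diag_mul_vmv {n : ℕ} (w a s : Fin n → ℝ) :
    Matrix.diagonal w * vecMulVec a s = vecMulVec (fun i => w i * a i) s := by
  ext i j
  simp [Matrix.diagonal_mul, vecMulVec_apply, mul_assoc]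

private lemma vmv_zero {n : ℕ} (a : Fin n → ℝ) : vecMulVec a (0 : Fin n → ℝ) = 0 := by
  ext i j; simp [vecMulVec_apply]

private lemma zero_vmv {n : ℕ} (a : Fin n → ℝ) : vecMulVec (0 : Fin n → ℝ) a = 0 := by
  ext i j; simp [vecMulVec_apply]

private lemma vmv_transpose {n : ℕ} (a s : Fin n → ℝ) :
    (vecMulVec a s)ᵀ = vecMulVec s a := by
  ext i j; simp [vecMulVec_apply, mul_comm]

/-- **Part of Theorem 5.4.** For each `1 ≤ k ≤ n`, the Poisson–Gaussian class `V_{I,k}` (with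
domain of the means `(0,∞)^k × ℝ^{n−k}`) and the negative-multinomial–gamma class `V_{IV,k}` are
in the same `G`-orbit: some `T_g` sends `V_{I,k}` to `V_{IV,k}` on a nonempty open set. -/
theorem VIk_VIVk_same_orbit {n k : ℕ} (hn : 1 ≤ n) (hk1 : 1 ≤ k) (hkn : k ≤ n) :
    ∃ (A : Matrix (Fin n) (Fin n) ℝ) (b c : Fin n → ℝ) (d : ℝ) (U : Set (Fin n → ℝ)),
      (blockMat A b c d).det ≠ 0 ∧
      U.Nonempty ∧ IsOpen U ∧
      (∀ m ∈ U, 0 < c ⬝ᵥ m + d) ∧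
      (∀ m ∈ U, ∀ i : Fin n, (i : ℕ) < k → 0 < homog A b c d m i) ∧
      (∀ m ∈ U, Tg A b c d (VIk k) m = VIVk hn k m) := by
  classical
  set z : Fin n := ⟨0, hn⟩ with hz
  set A : Matrix (Fin n) (Fin n) ℝ := Matrix.diagonal (fun i => if i = z then 0 else 1) with hA
  set b : Fin n → ℝ := Pi.single z 1 with hb
  have hzk : (z : ℕ) < k := hk1
  have hdot : ∀ m : Fin n → ℝ, b ⬝ᵥ m + 0 = m z := by
    intro m; rw [hb, single_dotProduct]; ring
  have hmv : ∀ (m : Fin n → ℝ) (i : Fin n), (A.mulVec m + b) i = if i = z then 1 else m i := by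
    intro m i
    rw [Pi.add_apply, hA, Matrix.mulVec_diagonal, hb]
    by_cases h : i = z <;> simp [h, Pi.single_apply]
  refine ⟨A, b, b, 0, {m | ∀ i, 0 < m i}, ?_, ⟨fun _ => 1, fun i => one_pos⟩, ?_, ?_, ?_, ?_⟩
  · -- the determinant of `g` is nonzero, since `g * g = 1`
    have h11 : A * A + (Matrix.of fun i (_ : Unit) => b i) * (Matrix.of fun (_ : Unit) j => b j)
        = (1 : Matrix (Fin n) (Fin n) ℝ) := by
      rw [hA, Matrix.diagonal_mul_diagonal]
      ext i j
      simp only [Matrix.add_apply, Matrix.mul_apply, Finset.univ_unique, Finset.sum_singleton,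
        hb, Pi.single_apply, Matrix.diagonal_apply, Matrix.one_apply, Matrix.of_apply]
      by_cases hi : i = z <;> by_cases hj : j = z <;>
        simp [hi, hj] <;> simp_all [eq_comm]
    have h12 : A * (Matrix.of fun i (_ : Unit) => b i)
        + (Matrix.of fun i (_ : Unit) => b i) * (Matrix.of fun (_ : Unit) (_ : Unit) => (0:ℝ))
        = 0 := by
      ext i j
      simp [Matrix.mul_apply, hA, hb, Matrix.diagonal_apply, Pi.single_apply, ite_mul, mul_ite,
        Finset.sum_ite_eq]
    have h21 : (Matrix.of fun (_ : Unit) j => b j) * A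
        + (Matrix.of fun (_ : Unit) (_ : Unit) => (0:ℝ)) * (Matrix.of fun (_ : Unit) j => b j)
        = 0 := by
      ext i j
      simp [Matrix.mul_apply, hA, hb, Matrix.diagonal_apply, Pi.single_apply, ite_mul, mul_ite,
        Finset.sum_ite_eq]
    have h22 : (Matrix.of fun (_ : Unit) j => b j) * (Matrix.of fun i (_ : Unit) => b i)
        + (Matrix.of fun (_ : Unit) (_ : Unit) => (0:ℝ)) *
            (Matrix.of fun (_ : Unit) (_ : Unit) => (0:ℝ))
        = 1 := by
      ext i j
      simp [Matrix.mul_apply, hb, Pi.single_apply, ite_mul, mul_ite, Finset.sum_ite_eq,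
        Matrix.one_apply]
    have hgg : blockMat A b b 0 * blockMat A b b 0 = 1 := by
      change Matrix.fromBlocks A (Matrix.of fun i (_ : Unit) => b i)
          (Matrix.of fun (_ : Unit) j => b j) (Matrix.of fun (_ : Unit) (_ : Unit) => (0:ℝ)) *
        Matrix.fromBlocks A (Matrix.of fun i (_ : Unit) => b i)
          (Matrix.of fun (_ : Unit) j => b j) (Matrix.of fun (_ : Unit) (_ : Unit) => (0:ℝ)) = 1
      rw [Matrix.fromBlocks_multiply, ← Matrix.fromBlocks_one]
      rw [Matrix.fromBlocks_inj]
      exact ⟨h11, h12, h21, h22⟩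
    have h1 : (blockMat A b b 0).det * (blockMat A b b 0).det = 1 := by
      rw [← Matrix.det_mul, hgg, Matrix.det_one]
    intro hdet
    rw [hdet, mul_zero] at h1
    exact zero_ne_one h1
  · -- openness
    have : {m : Fin n → ℝ | ∀ i, 0 < m i} = Set.pi Set.univ (fun _ => Set.Ioi (0 : ℝ)) := by
      ext m; simp [Set.mem_pi]
    rw [this]
    exact isOpen_set_pi Set.finite_univ (fun _ _ => isOpen_Ioi)
  · intro m hm; rw [hdot]; exact hm z
  · -- positivity of the first k coordinates of h(m)
    intro m hm i _
    have hp : 0 < m z := hm z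
    rw [homog, hdot, Pi.smul_apply, smul_eq_mul, hmv]
    by_cases h : i = z
    · rw [if_pos h, mul_one]; exact inv_pos.2 hp
    · rw [if_neg h]; exact mul_pos (inv_pos.2 hp) (hm i)
  · -- the main identity
    intro m hm
    have hp : 0 < m z := hm z
    have hp0 : m z ≠ 0 := ne_of_gt hp
    set w : Fin n → ℝ := fun i => if i = z then 0 else m z with hw
    set K : Matrix (Fin n) (Fin n) ℝ :=
      vecMulVec m (Pi.single z (-(m z))) + Matrix.diagonal w with hK
    have hJ : homogJac A b b 0 m =
        vecMulVec (fun i => if i = z then 1 else m i) (Pi.single z (-((m z)^2)⁻¹))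
          + Matrix.diagonal (fun i => if i = z then 0 else (m z)⁻¹) := by
      ext i t
      rw [homogJac, hdot]
      simp only [Matrix.smul_apply, Matrix.sub_apply, smul_eq_mul, vecMulVec_apply, hmv]
      simp only [Matrix.smul_apply, Matrix.sub_apply, smul_eq_mul, vecMulVec_apply, hmv,
        Matrix.add_apply, hA, Matrix.diagonal_apply, hb, Pi.single_apply]
      by_cases hiz : i = z <;> by_cases htz : t = z <;> by_cases hti : i = t <;>
        simp only [hiz, htz, hti, if_true, if_false, ite_true, ite_false, ite_self, mul_zero,
          zero_mul, add_zero, zero_add, neg_zero] <;>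
        first
          | exact absurd (hti.symm.trans hiz) htz
          | exact absurd (hti.trans htz) hiz
          | (field_simp; ring; done)
          | (ring; done)
          | (simp; done)
          | (field_simp; done)
    have hJK : homogJac A b b 0 m * K = 1 := by
      rw [hJ, hK, add_mul, mul_add, mul_add, vmv_mul_vmv, vmv_mul_diag, diag_mul_vmv,
        Matrix.diagonal_mul_diagonal, single_dotProduct]
      have e1 : (fun j => (Pi.single z (-((m z)^2)⁻¹) : Fin n → ℝ) j * w j) = (0 : Fin n → ℝ) := by
        funext j; by_cases h : j = z <;> simp [hw, h, Pi.single_apply]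
      rw [e1, vmv_zero]
      ext i j
      simp only [Matrix.add_apply, Matrix.smul_apply, smul_eq_mul, vecMulVec_apply,
        Pi.single_apply, Matrix.diagonal_apply, Matrix.one_apply, Matrix.zero_apply, hw]
      by_cases hiz : i = z <;> by_cases hjz : j = z <;> by_cases hij : i = j <;>
        simp only [hiz, hjz, hij, if_true, if_false, ite_true, ite_false, ite_self, mul_zero,
          zero_mul, add_zero, zero_add, neg_zero] <;>
        first
          | exact absurd (hij.symm.trans hiz) hjz
          | exact absurd (hij.trans hjz) hiz
          | (field_simp; ring; done)
          | (ring; done)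
          | (simp; done)
          | (simp [Ne.symm hjz]; done)
          | (simp [Ne.symm hiz]; done)
          | (field_simp; done)
    have hKinv : (homogJac A b b 0 m)⁻¹ = K := Matrix.inv_eq_right_inv hJK
    have hKTinv : ((homogJac A b b 0 m)ᵀ)⁻¹ = Kᵀ := by
      rw [← Matrix.transpose_nonsing_inv, hKinv]
    -- the variance function at h(m)
    set v : Fin n → ℝ :=
      fun t => if (t : ℕ) < k then (m z)⁻¹ * (if t = z then 1 else m t) else 1 with hv
    have hV : VIk k (homog A b b 0 m) = Matrix.diagonal v := by
      have : (fun t : Fin n => if (t : ℕ) < k then homog A b b 0 m t else 1) = v := by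
        funext t
        rw [hv]
        by_cases h : (t : ℕ) < k <;>
          simp only [h, if_true, if_false, ite_true, ite_false]
        rw [homog, hdot, Pi.smul_apply, smul_eq_mul, hmv]
      rw [VIk, this]
    have hvz : v z = (m z)⁻¹ := by rw [hv]; simp [hzk]
    -- compute K * V * Kᵀ
    have hprod : K * Matrix.diagonal v * Kᵀ =
        (m z) • vecMulVec m m + Matrix.diagonal (fun i => w i * v i * w i) := by
      rw [hK, Matrix.transpose_add, vmv_transpose, Matrix.diagonal_transpose]
      rw [add_mul, vmv_mul_diag, Matrix.diagonal_mul_diagonal]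
      rw [add_mul, mul_add, mul_add, vmv_mul_vmv, vmv_mul_diag, diag_mul_vmv,
        Matrix.diagonal_mul_diagonal]
      have e2 : (fun j => (Pi.single z (-(m z)) : Fin n → ℝ) j * v j) ⬝ᵥ
          (Pi.single z (-(m z)) : Fin n → ℝ) = m z := by
        rw [dotProduct_single, Pi.single_eq_same, hvz]
        field_simp
      have e3 : (fun j => (Pi.single z (-(m z)) : Fin n → ℝ) j * v j * w j) = (0 : Fin n → ℝ) := by
        funext j; by_cases h : j = z <;> simp [hw, h, Pi.single_apply]
      have e4 : (fun i => w i * v i * (Pi.single z (-(m z)) : Fin n → ℝ) i) = (0 : Fin n → ℝ) := by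
        funext j; by_cases h : j = z <;> simp [hw, h, Pi.single_apply]
      rw [e2, e3, e4, vmv_zero, zero_vmv]
      abel
    rw [Tg, hdot, hKinv, hKTinv, hV, hprod]
    -- final entrywise comparison
    ext i j
    rw [VIVk]
    simp only [Matrix.smul_apply, Matrix.add_apply, smul_eq_mul, vecMulVec_apply,
      Matrix.diagonal_apply, hw, hv]
    have hiz0 : ((i : ℕ) = 0) = (i = z) := by
      simp [hz, Fin.ext_iff]
    simp only [hiz0]
    rcases eq_or_ne i j with rfl | hij
    · by_cases hiz : i = z <;> by_cases hik : (i : ℕ) < k <;>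
        simp only [hiz, hik, hzk, eq_self_iff_true, if_true, if_false, ite_true, ite_false,
          ite_self, mul_zero, zero_mul, add_zero, zero_add] <;>
        first
          | exact absurd (by rw [hiz]; exact hzk) hik
          | (field_simp; ring; done)
          | (field_simp; done)
          | (ring; done)
          | (simp; done)
    · simp only [hij, if_false, ite_false, add_zero]
      field_simp
end
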